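/- There exists a universal constant C > 0 such that for all a_i, a_j ∈ ℝ³, all δ > 0, and all λ_i, λ_j > 0, one has ∫_{{|x−a_j| ≤ 4δ}} (λ_j/(1+λ_j²|x−a_j|²))^{1/2}·(λ_i/(1+λ_i²|x−a_i|²))^{1/2} dx ≤ C·δ²·(λ_i/λ_j + λ_iλ_j|a_i−a_j|²)^{−1/2}. -/

import Mathlib

open MeasureTheory Metric Set Filter Topology Bornology
open scoped InnerProductSpace

noncomputable section

/-- Euclidean three-space. -/
abbrev E3 : Type := EuclideanSpace ℝ (Fin 3)

/-- The Euclidean Laplacian of `f : E3 → ℝ`, as the sum of the pure second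
derivatives in the coordinate directions. -/
def lap (f : E3 → ℝ) (x : E3) : ℝ :=
  ∑ i : Fin 3, iteratedFDeriv ℝ 2 f x (fun _ => EuclideanSpace.single i (1 : ℝ))

/-- The standard bubble `δ_{a,λ}(x) = c₀ (λ/(1+λ²|x-a|²))^{1/2}`. -/
def stdBubble (c₀ : ℝ) (a : E3) (l : ℝ) (x : E3) : ℝ :=
  c₀ * Real.sqrt (l / (1 + l ^ 2 * ‖x - a‖ ^ 2))

/-- The Brendle–Schoen bubble
`u_{a,λ,δ} = χ^a_δ δ_{a,λ} + (1 - χ^a_δ) c₀ G(a,·)/√λ`. -/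
def bsBubble (c₀ : ℝ) (χ : ℝ → ℝ) (G : E3 → E3 → ℝ) (δ : ℝ) (a : E3) (l : ℝ) (x : E3) : ℝ :=
  χ (‖x - a‖ / δ) * stdBubble c₀ a l x
    + (1 - χ (‖x - a‖ / δ)) * (c₀ / Real.sqrt l) * G a x

/-- The interaction quantity
`ε_{ij} = [λᵢ/λⱼ + λⱼ/λᵢ + λᵢλⱼ G(ai,aj)⁻²]^{-1/2}`. -/
def epsParam (G : E3 → E3 → ℝ) (a₁ a₂ : E3) (l₁ l₂ : ℝ) : ℝ :=
  Real.sqrt (1 / (l₁ / l₂ + l₂ / l₁ + l₁ * l₂ / (G a₁ a₂) ^ 2))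

/-- `ϱ₀ = dist(K, ∂Ω)/4`. -/
def rho0 (Ω K : Set E3) : ℝ :=
  sInf {d : ℝ | ∃ x ∈ K, ∃ y ∈ frontier Ω, d = dist x y} / 4

/-- The scalar product `⟨u,v⟩_q = ∫_Ω (⟨∇u,∇v⟩ + q u v)`. -/
def innerQ (Ω : Set E3) (q : E3 → ℝ) (u v : E3 → ℝ) : ℝ :=
  ∫ x in Ω, (⟪gradient u x, gradient v x⟫_ℝ + q x * u x * v x)

/-- The norm `‖u‖_q = (∫_Ω (|∇u|² + q u²))^{1/2}`. -/
def normQ (Ω : Set E3) (q : E3 → ℝ) (u : E3 → ℝ) : ℝ :=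
  Real.sqrt (innerQ Ω q u u)

/-- The Brezis–Nirenberg functional `J_q(u) = ⟨u,u⟩_q / (∫_Ω u⁶)^{1/3}`. -/
def Jq (Ω : Set E3) (q : E3 → ℝ) (u : E3 → ℝ) : ℝ :=
  innerQ Ω q u u / (∫ x in Ω, (u x) ^ 6) ^ ((1 : ℝ) / 3)

/-- The best Sobolev constant `S` of `ℝ³`:
`S = inf {∫ |∇u|² / (∫ u⁶)^{1/3} : u ∈ D¹(ℝ³), u ≠ 0}`. -/
def sobolevS : ℝ :=
  sInf {r : ℝ | ∃ u : E3 → ℝ, u ≠ 0 ∧ MeasureTheory.MemLp u 6 MeasureTheory.volume ∧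
    MeasureTheory.MemLp (fun x => ‖gradient u x‖) 2 MeasureTheory.volume ∧
    r = (∫ x, ‖gradient u x‖ ^ 2) / (∫ x, (u x) ^ 6) ^ ((1 : ℝ) / 3)}

/-- The constant `c₃ = ∫_{ℝ³} (1/(1+|y|²))^{5/2} dy`. -/
def cThree : ℝ := ∫ y : E3, (1 / (1 + ‖y‖ ^ 2)) ^ ((5 : ℝ) / 2)

/-- The derivative of `J_q` at `u` in the direction `v`. -/
def dJq (Ω : Set E3) (q : E3 → ℝ) (u v : E3 → ℝ) : ℝ :=
  (2 / (∫ x in Ω, (u x) ^ 6) ^ ((1 : ℝ) / 3)) *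
    (innerQ Ω q u v - (innerQ Ω q u u / ∫ x in Ω, (u x) ^ 6) * ∫ x in Ω, (u x) ^ 5 * v x)

/-- The set `H^{1,+}₀(Ω)` of admissible nonnegative functions vanishing on `∂Ω`. -/
def Hplus (Ω : Set E3) : Set (E3 → ℝ) :=
  {u | (∀ x, 0 ≤ u x) ∧ u ≠ 0 ∧ ∀ x ∈ frontier Ω, u x = 0}

/-- The sublevel set `W_p = {u ∈ H^{1,+}₀(Ω) : J_q(u) ≤ (p+1)^{2/3} S}`. -/
def Wset (Ω : Set E3) (q : E3 → ℝ) (p : ℕ) : Set (E3 → ℝ) :=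
  {u | u ∈ Hplus Ω ∧ Jq Ω q u ≤ ((p : ℝ) + 1) ^ ((2 : ℝ) / 3) * sobolevS}

/-- The neighborhood `V(p, ε)` of potential critical points at infinity. -/
def Vset (Ω : Set E3) (q : E3 → ℝ) (c₀ : ℝ) (χ : ℝ → ℝ) (G : E3 → E3 → ℝ)
    (δ ν₀ : ℝ) (p : ℕ) (ε : ℝ) : Set (E3 → ℝ) :=
  {u | u ∈ Hplus Ω ∧ ∃ (a : Fin p → E3) (α l : Fin p → ℝ),
    (∀ i, a i ∈ Ω) ∧ (∀ i, 0 < α i) ∧ (∀ i, 0 < l i) ∧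
    (∀ i, 1 / ε ≤ l i) ∧ (∀ i, 1 / ε ≤ l i * infDist (a i) (frontier Ω)) ∧
    normQ Ω q (fun x => u x - ∑ i, α i * bsBubble c₀ χ G δ (a i) (l i) x) ≤ ε ∧
    ∀ i j, i ≠ j → α i / α j ≤ ν₀ ∧ epsParam G (a i) (a j) (l i) (l j) ≤ ε}

section InteractionHelpers


lemma vol_cb (a : E3) {r : ℝ} (hr : 0 ≤ r) :
    volume (closedBall a r) = ENNReal.ofReal (r ^ 3) * volume (ball (0:E3) 1) := by
  have h := Measure.addHaar_closedBall (volume : Measure E3) a hr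
  simpa using h

lemma cover_annuli (a : E3) {R : ℝ} (hR : 0 < R) :
    closedBall a R ⊆ {a} ∪ ⋃ k : ℕ,
      (closedBall a (R * (2⁻¹:ℝ) ^ k) \ closedBall a (R * (2⁻¹:ℝ) ^ (k+1))) := by
  intro x hx
  rcases eq_or_ne x a with h | h
  · exact Or.inl (by simp [h])
  · refine Or.inr ?_
    have hs : 0 < dist x a := dist_pos.2 h
    have hsR : dist x a ≤ R := mem_closedBall.1 hx
    have hex : ∃ k : ℕ, R * (2⁻¹:ℝ) ^ (k+1) < dist x a := by
      obtain ⟨n, hn⟩ := exists_pow_lt_of_lt_one (div_pos hs hR) (by norm_num : (2⁻¹:ℝ) < 1)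
      refine ⟨n, ?_⟩
      have h1 : (2⁻¹:ℝ) ^ (n+1) ≤ (2⁻¹:ℝ) ^ n :=
        pow_le_pow_of_le_one (by norm_num) (by norm_num) (Nat.le_succ n)
      have h2 : R * (2⁻¹:ℝ) ^ n < dist x a := by
        rw [lt_div_iff₀ hR] at hn; linarith [hn]
      nlinarith
    classical
    refine mem_iUnion.2 ⟨Nat.find hex, ?_, ?_⟩
    · rw [mem_closedBall]
      rcases Nat.eq_zero_or_pos (Nat.find hex) with h0 | h0
      · rw [h0]; simpa using hsR
      · obtain ⟨m, hm⟩ := Nat.exists_eq_add_of_lt h0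
        have hmm : Nat.find hex = m + 1 := by omega
        have h2 := Nat.find_min hex (m := m) (by omega)
        push_neg at h2
        rw [hmm]
        exact h2
    · simpa [mem_closedBall, not_le] using Nat.find_spec hex

lemma lint_inv_pow_le (a : E3) {R : ℝ} (hR : 0 < R) {p : ℕ} (hp : 1 ≤ p) (hp2 : p ≤ 2) :
    ∫⁻ x in closedBall a R, ENNReal.ofReal ((‖x - a‖ ^ p)⁻¹) ≤
      ENNReal.ofReal (8 * R ^ (3 - p)) * volume (ball (0:E3) 1) := by
  set v := volume (ball (0:E3) 1) with hv
  set A : ℕ → Set E3 := fun k =>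
    closedBall a (R * (2⁻¹:ℝ) ^ k) \ closedBall a (R * (2⁻¹:ℝ) ^ (k+1)) with hA
  set f : E3 → ENNReal := fun x => ENNReal.ofReal ((‖x - a‖ ^ p)⁻¹) with hf
  have step1 : ∫⁻ x in closedBall a R, f x ≤ ∑' k : ℕ, ∫⁻ x in A k, f x := by
    calc ∫⁻ x in closedBall a R, f x ≤ ∫⁻ x in {a} ∪ ⋃ k : ℕ, A k, f x :=
          lintegral_mono_set (cover_annuli a hR)
      _ ≤ (∫⁻ x in ({a} : Set E3), f x) + ∫⁻ x in ⋃ k : ℕ, A k, f x :=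
          lintegral_union_le _ _ _
      _ ≤ 0 + ∑' k : ℕ, ∫⁻ x in A k, f x := by
          gcongr
          · rw [Measure.restrict_singleton]
            simp
          · exact lintegral_iUnion_le _ _
      _ = ∑' k : ℕ, ∫⁻ x in A k, f x := by rw [zero_add]
  have key : ∀ k : ℕ, ((R * (2⁻¹:ℝ) ^ (k+1)) ^ p)⁻¹ * (R * (2⁻¹:ℝ) ^ k) ^ 3 ≤
      4 * R ^ (3 - p) * (2⁻¹:ℝ) ^ k := by
    intro k
    set t : ℝ := (2⁻¹:ℝ) ^ k with ht
    have ht0 : 0 < t := pow_pos (by norm_num) k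
    have ht1 : t ≤ 1 := pow_le_one₀ (by norm_num) (by norm_num)
    have hu0 : 0 < R * t := mul_pos hR ht0
    have e1 : R * (2⁻¹:ℝ) ^ (k+1) = (R * t) * 2⁻¹ := by rw [ht, pow_succ]; ring
    have e2 : (R * t) ^ 3 = (R * t) ^ p * (R * t) ^ (3 - p) := by
      rw [← pow_add]; congr 1; omega
    rw [e1, mul_pow, mul_inv, e2]
    have e3 : ((R * t) ^ p)⁻¹ * ((2⁻¹:ℝ) ^ p)⁻¹ * ((R * t) ^ p * (R * t) ^ (3 - p))
        = (2:ℝ) ^ p * (R * t) ^ (3 - p) := by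
      have hne : (R * t) ^ p ≠ 0 := by positivity
      rw [inv_pow, inv_inv, mul_comm ((R * t) ^ p)⁻¹, mul_assoc, inv_mul_cancel_left₀ hne]
    rw [e3]
    have h4 : (2:ℝ) ^ p ≤ 4 := by
      calc (2:ℝ) ^ p ≤ 2 ^ 2 := pow_le_pow_right₀ (by norm_num) hp2
        _ = 4 := by norm_num
    have h5 : (R * t) ^ (3 - p) ≤ R ^ (3 - p) * t := by
      rw [mul_pow]
      have : t ^ (3 - p) ≤ t := by
        calc t ^ (3-p) ≤ t ^ 1 := pow_le_pow_of_le_one ht0.le ht1 (by omega)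
          _ = t := pow_one t
      have hRp : (0:ℝ) ≤ R ^ (3 - p) := by positivity
      nlinarith
    calc (2:ℝ) ^ p * (R * t) ^ (3 - p) ≤ 4 * (R ^ (3-p) * t) := by
          have : (0:ℝ) ≤ (R*t) ^ (3-p) := by positivity
          nlinarith
      _ = 4 * R ^ (3-p) * t := by ring
  have step2 : ∀ k : ℕ, ∫⁻ x in A k, f x ≤
      ENNReal.ofReal (4 * R ^ (3 - p)) * ENNReal.ofReal ((2⁻¹:ℝ) ^ k) * v := by
    intro k
    have hr1 : 0 < R * (2⁻¹:ℝ) ^ (k+1) := mul_pos hR (pow_pos (by norm_num) _)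
    have hr0 : 0 ≤ R * (2⁻¹:ℝ) ^ k := le_of_lt (mul_pos hR (pow_pos (by norm_num) _))
    have hAm : MeasurableSet (A k) :=
      measurableSet_closedBall.diff measurableSet_closedBall
    calc ∫⁻ x in A k, f x
        ≤ ∫⁻ _ in A k, ENNReal.ofReal (((R * (2⁻¹:ℝ) ^ (k+1)) ^ p)⁻¹) := by
          refine setLIntegral_mono' hAm fun x hx => ?_
          refine ENNReal.ofReal_le_ofReal ?_
          have hgt : R * (2⁻¹:ℝ) ^ (k+1) < ‖x - a‖ := by
            have := hx.2
            rw [mem_closedBall, not_le, dist_eq_norm] at this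
            exact this
          exact inv_anti₀ (pow_pos hr1 p)
            (pow_le_pow_left₀ hr1.le hgt.le p)
      _ = ENNReal.ofReal (((R * (2⁻¹:ℝ) ^ (k+1)) ^ p)⁻¹) * volume (A k) :=
          setLIntegral_const _ _
      _ ≤ ENNReal.ofReal (((R * (2⁻¹:ℝ) ^ (k+1)) ^ p)⁻¹) *
            volume (closedBall a (R * (2⁻¹:ℝ) ^ k)) := by
          gcongr
          exact diff_subset
      _ = ENNReal.ofReal (((R * (2⁻¹:ℝ) ^ (k+1)) ^ p)⁻¹) *
            (ENNReal.ofReal ((R * (2⁻¹:ℝ) ^ k) ^ 3) * v) := by rw [vol_cb a hr0]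
      _ = ENNReal.ofReal (((R * (2⁻¹:ℝ) ^ (k+1)) ^ p)⁻¹ * (R * (2⁻¹:ℝ) ^ k) ^ 3) * v := by
          rw [ENNReal.ofReal_mul (by positivity), mul_assoc]
      _ ≤ ENNReal.ofReal (4 * R ^ (3 - p) * (2⁻¹:ℝ) ^ k) * v :=
          mul_le_mul_left (ENNReal.ofReal_le_ofReal (key k)) v
      _ = ENNReal.ofReal (4 * R ^ (3 - p)) * ENNReal.ofReal ((2⁻¹:ℝ) ^ k) * v := by
          rw [ENNReal.ofReal_mul (by positivity)]
  have geom : ∑' k : ℕ, ENNReal.ofReal ((2⁻¹:ℝ) ^ k) = 2 := by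
    have e : ∀ k : ℕ, ENNReal.ofReal ((2⁻¹:ℝ) ^ k) = (2⁻¹ : ENNReal) ^ k := by
      intro k
      rw [ENNReal.ofReal_pow (by norm_num),
        ENNReal.ofReal_inv_of_pos (by norm_num), ENNReal.ofReal_ofNat]
    simp only [e]
    rw [ENNReal.tsum_geometric, ENNReal.one_sub_inv_two, inv_inv]
  calc ∫⁻ x in closedBall a R, f x ≤ ∑' k : ℕ, ∫⁻ x in A k, f x := step1
    _ ≤ ∑' k : ℕ, ENNReal.ofReal (4 * R ^ (3 - p)) * ENNReal.ofReal ((2⁻¹:ℝ) ^ k) * v :=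
        ENNReal.tsum_le_tsum step2
    _ = ENNReal.ofReal (4 * R ^ (3 - p)) * v * ∑' k : ℕ, ENNReal.ofReal ((2⁻¹:ℝ) ^ k) := by
        rw [← ENNReal.tsum_mul_left]
        congr 1; ext k; ring
    _ = ENNReal.ofReal (4 * R ^ (3 - p)) * v * 2 := by rw [geom]
    _ = ENNReal.ofReal (8 * R ^ (3 - p)) * v := by
        have h8 : ENNReal.ofReal (4 * R ^ (3-p)) * 2 = ENNReal.ofReal (8 * R ^ (3-p)) := by
          rw [← ENNReal.ofReal_ofNat 2, ← ENNReal.ofReal_mul (by positivity)]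
          congr 1; ring
        rw [mul_right_comm, h8]

lemma lint_inv_pow_off (b a : E3) {R : ℝ} (hR : 0 < R) {p : ℕ} (hp : 1 ≤ p) (hp2 : p ≤ 2) :
    ∫⁻ x in closedBall b R, ENNReal.ofReal ((‖x - a‖ ^ p)⁻¹) ≤
      ENNReal.ofReal (9 * R ^ (3 - p)) * volume (ball (0:E3) 1) := by
  set v := volume (ball (0:E3) 1) with hv
  have hsub : closedBall b R ⊆ closedBall a R ∪ (closedBall b R \ closedBall a R) := by
    intro x hx
    by_cases h : x ∈ closedBall a R
    · exact Or.inl h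
    · exact Or.inr ⟨hx, h⟩
  calc ∫⁻ x in closedBall b R, ENNReal.ofReal ((‖x - a‖ ^ p)⁻¹)
      ≤ ∫⁻ x in closedBall a R ∪ (closedBall b R \ closedBall a R),
          ENNReal.ofReal ((‖x - a‖ ^ p)⁻¹) := lintegral_mono_set hsub
    _ ≤ (∫⁻ x in closedBall a R, ENNReal.ofReal ((‖x - a‖ ^ p)⁻¹))
        + ∫⁻ x in closedBall b R \ closedBall a R, ENNReal.ofReal ((‖x - a‖ ^ p)⁻¹) :=
        lintegral_union_le _ _ _
    _ ≤ ENNReal.ofReal (8 * R ^ (3 - p)) * v + ENNReal.ofReal (R ^ (3 - p)) * v := by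
        gcongr
        · exact lint_inv_pow_le a hR hp hp2
        · calc ∫⁻ x in closedBall b R \ closedBall a R, ENNReal.ofReal ((‖x - a‖ ^ p)⁻¹)
              ≤ ∫⁻ _ in closedBall b R \ closedBall a R, ENNReal.ofReal ((R ^ p)⁻¹) := by
                refine setLIntegral_mono' (measurableSet_closedBall.diff
                  measurableSet_closedBall) fun x hx => ?_
                refine ENNReal.ofReal_le_ofReal ?_
                have : R < ‖x - a‖ := by
                  have := hx.2
                  rwa [mem_closedBall, not_le, dist_eq_norm] at this
                exact inv_anti₀ (pow_pos hR p) (pow_le_pow_left₀ hR.le this.le p)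
            _ = ENNReal.ofReal ((R ^ p)⁻¹) * volume (closedBall b R \ closedBall a R) :=
                setLIntegral_const _ _
            _ ≤ ENNReal.ofReal ((R ^ p)⁻¹) * volume (closedBall b R) := by
                gcongr; exact diff_subset
            _ = ENNReal.ofReal ((R ^ p)⁻¹) * (ENNReal.ofReal (R ^ 3) * v) := by
                rw [vol_cb b hR.le]
            _ = ENNReal.ofReal ((R ^ p)⁻¹ * R ^ 3) * v := by
                rw [ENNReal.ofReal_mul (by positivity), mul_assoc]
            _ = ENNReal.ofReal (R ^ (3 - p)) * v := by
                congr 1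
                have : (R:ℝ) ^ 3 = R ^ p * R ^ (3 - p) := by
                  rw [← pow_add]; congr 1; omega
                rw [this]
                field_simp
    _ = ENNReal.ofReal (9 * R ^ (3 - p)) * v := by
        rw [← add_mul, ← ENNReal.ofReal_add (by positivity) (by positivity)]
        congr 2
        ring

lemma ptwise {li lj r s d : ℝ} (hli : 0 < li) (hlj : 0 < lj) (hr : 0 < r) (hs : 0 < s)
    (hd : 0 ≤ d) :
    Real.sqrt (lj / (1 + lj ^ 2 * r ^ 2)) * Real.sqrt (li / (1 + li ^ 2 * s ^ 2)) ≤
      (Real.sqrt (li / lj + li * lj * d ^ 2))⁻¹ * (s⁻¹ + d * (r * s)⁻¹) := by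
  have h1r : (0:ℝ) < 1 + lj ^ 2 * r ^ 2 := by positivity
  have h1s : (0:ℝ) < 1 + li ^ 2 * s ^ 2 := by positivity
  have hP2 : (0:ℝ) < li / lj + li * lj * d ^ 2 := by positivity
  set G : ℝ := (Real.sqrt (li / lj + li * lj * d ^ 2))⁻¹ * (s⁻¹ + d * (r * s)⁻¹) with hG
  have hG0 : 0 ≤ G := by positivity
  have hF : Real.sqrt (lj / (1 + lj ^ 2 * r ^ 2)) * Real.sqrt (li / (1 + li ^ 2 * s ^ 2))
      = Real.sqrt ((lj / (1 + lj ^ 2 * r ^ 2)) * (li / (1 + li ^ 2 * s ^ 2))) :=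
    (Real.sqrt_mul (by positivity) _).symm
  rw [hF, ← Real.sqrt_sq hG0]
  refine Real.sqrt_le_sqrt ?_
  have hG2 : G ^ 2 = (li / lj + li * lj * d ^ 2)⁻¹ * (s⁻¹ + d * (r * s)⁻¹) ^ 2 := by
    rw [hG, mul_pow, inv_pow, Real.sq_sqrt hP2.le]
  rw [hG2]
  have e1 : (s⁻¹ + d * (r * s)⁻¹) = (r + d) / (r * s) := by
    field_simp
  have e2 : (lj / (1 + lj ^ 2 * r ^ 2)) * (li / (1 + li ^ 2 * s ^ 2))
      = (lj * li) / ((1 + lj ^ 2 * r ^ 2) * (1 + li ^ 2 * s ^ 2)) := by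
    rw [div_mul_div_comm]
  have e3 : (li / lj + li * lj * d ^ 2)⁻¹ = lj / (li * (1 + lj ^ 2 * d ^ 2)) := by
    rw [show li / lj + li * lj * d ^ 2 = li * (1 + lj ^ 2 * d ^ 2) / lj by field_simp,
      inv_div]
  rw [e1, e2, e3, div_pow, div_mul_div_comm]
  rw [div_le_div_iff₀ (by positivity) (by positivity)]
  have key : (1 + lj ^ 2 * d ^ 2) * r ^ 2 ≤ (r + d) ^ 2 * (1 + lj ^ 2 * r ^ 2) := by
    nlinarith [mul_nonneg hr.le hd, sq_nonneg d, pow_pos hr 4,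
      mul_nonneg (mul_nonneg (sq_nonneg lj) (pow_pos hr 3).le) hd]
  nlinarith [mul_le_mul_of_nonneg_left key (by positivity : (0:ℝ) ≤ lj * li * (li ^ 2 * s ^ 2)),
    mul_pos (mul_pos hlj hli) (mul_pos (mul_pos h1r h1s) hr),
    sq_nonneg ((r + d) * s), mul_pos hlj hli,
    mul_nonneg (mul_nonneg hlj.le hli.le) (sq_nonneg ((r+d) * lj * r))]

lemma ofReal_mul3 (a b c : ℝ) (ha : 0 ≤ a) (hb : 0 ≤ b) (w : ENNReal) :
    ENNReal.ofReal a * (ENNReal.ofReal b * (ENNReal.ofReal c * w))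
      = ENNReal.ofReal (a * b * c) * w := by
  rw [ENNReal.ofReal_mul (mul_nonneg ha hb), ENNReal.ofReal_mul ha, mul_assoc, mul_assoc]

end InteractionHelpers

set_option maxHeartbeats 1000000 in
/-- first standard-bubble interaction integral estimate, on the
ball `{|x - aj| ≤ 4δ}`. -/
theorem bubble_interaction_inner
    : ∃ C > (0 : ℝ), ∀ ai aj : E3, ∀ δ : ℝ, 0 < δ → ∀ li lj : ℝ, 0 < li → 0 < lj →
      (∫ x in {x : E3 | ‖x - aj‖ ≤ 4 * δ},
          Real.sqrt (lj / (1 + lj ^ 2 * ‖x - aj‖ ^ 2)) *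
          Real.sqrt (li / (1 + li ^ 2 * ‖x - ai‖ ^ 2))) ≤
        C * δ ^ 2 / Real.sqrt (li / lj + li * lj * ‖ai - aj‖ ^ 2) := by
  set v := volume (ball (0:E3) 1) with hv
  have hvne : v ≠ ⊤ := measure_ball_lt_top.ne
  have hvpos : 0 < v := measure_ball_pos volume 0 one_pos
  set V : ℝ := v.toReal with hV
  have hVpos : 0 < V := ENNReal.toReal_pos hvpos.ne' hvne
  refine ⟨432 * V, by positivity, ?_⟩
  intro ai aj δ hδ li lj hli hlj
  set R : ℝ := 4 * δ with hRdef
  have hR : 0 < R := by positivity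
  set d : ℝ := ‖ai - aj‖ with hd
  have hd0 : 0 ≤ d := norm_nonneg _
  set P : ℝ := Real.sqrt (li / lj + li * lj * d ^ 2) with hP
  have hPpos : 0 < P := Real.sqrt_pos.2 (by positivity)
  have hsetB : {x : E3 | ‖x - aj‖ ≤ 4 * δ} = closedBall aj R := by
    ext x; simp [mem_closedBall, dist_eq_norm, hRdef]
  set B : Set E3 := closedBall aj R with hB
  have hBm : MeasurableSet B := measurableSet_closedBall
  set F : E3 → ℝ := fun x => Real.sqrt (lj / (1 + lj ^ 2 * ‖x - aj‖ ^ 2)) *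
      Real.sqrt (li / (1 + li ^ 2 * ‖x - ai‖ ^ 2)) with hF
  set g : E3 → ℝ := fun x => P⁻¹ * (‖x - ai‖⁻¹ + d * (‖x - aj‖ * ‖x - ai‖)⁻¹) with hg
  -- measurability
  have hm1 : Measurable fun x : E3 => ENNReal.ofReal (‖x - ai‖⁻¹) := by fun_prop
  have hm2 : Measurable fun x : E3 => ENNReal.ofReal ((‖x - aj‖ * ‖x - ai‖)⁻¹) := by fun_prop
  have hFc : Continuous F := by
    apply Continuous.mul
    · apply Real.continuous_sqrt.comp
      apply Continuous.div (by fun_prop) (by fun_prop)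
      intro x; positivity
    · apply Real.continuous_sqrt.comp
      apply Continuous.div (by fun_prop) (by fun_prop)
      intro x; positivity
  -- a.e. pointwise bound
  have hae : ∀ᵐ x ∂(volume.restrict B), ENNReal.ofReal (F x) ≤ ENNReal.ofReal (g x) := by
    refine ae_restrict_of_ae ?_
    rw [ae_iff]
    refine measure_mono_null (fun x hx => ?_) ((Set.toFinite ({ai, aj} : Set E3)).measure_zero volume)
    simp only [mem_setOf_eq, not_le] at hx
    by_contra hmem
    simp only [mem_insert_iff, mem_singleton_iff, not_or] at hmem
    have hr : 0 < ‖x - aj‖ := by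
      rw [norm_pos_iff, sub_ne_zero]; exact hmem.2
    have hs : 0 < ‖x - ai‖ := by
      rw [norm_pos_iff, sub_ne_zero]; exact hmem.1
    exact absurd (ENNReal.ofReal_le_ofReal (ptwise hli hlj hr hs hd0)) (not_le.2 hx)
  -- bounds on the two pieces
  have b1 : ∫⁻ x in B, ENNReal.ofReal (‖x - ai‖⁻¹) ≤ ENNReal.ofReal (9 * R ^ 2) * v := by
    have h := lint_inv_pow_off aj ai hR (p := 1) le_rfl one_le_two
    simpa [hB, hv] using h
  have b2 : ENNReal.ofReal d * ∫⁻ x in B, ENNReal.ofReal ((‖x - aj‖ * ‖x - ai‖)⁻¹) ≤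
      ENNReal.ofReal (18 * R ^ 2) * v := by
    rcases le_or_gt d (2 * R) with hcase | hcase
    · -- d small : use AM-GM
      have hpt : ∀ x : E3, ((‖x - aj‖ * ‖x - ai‖)⁻¹ : ℝ) ≤
          2⁻¹ * ((‖x - aj‖ ^ 2)⁻¹ + (‖x - ai‖ ^ 2)⁻¹) := by
        intro x
        rcases eq_or_lt_of_le (norm_nonneg (x - aj)) with h0 | hrp
        · rw [← h0, zero_mul, inv_zero]; positivity
        rcases eq_or_lt_of_le (norm_nonneg (x - ai)) with h0 | hsp
        · rw [← h0, mul_zero, inv_zero]; positivity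
        set r := ‖x - aj‖; set s := ‖x - ai‖
        have e : 2⁻¹ * ((r ^ 2)⁻¹ + (s ^ 2)⁻¹) - (r * s)⁻¹ = (s - r) ^ 2 / (2 * r ^ 2 * s ^ 2) := by
          field_simp
          ring
        nlinarith [div_nonneg (sq_nonneg (s - r)) (by positivity : (0:ℝ) ≤ 2 * r ^ 2 * s ^ 2)]
      have step : ∫⁻ x in B, ENNReal.ofReal ((‖x - aj‖ * ‖x - ai‖)⁻¹) ≤
          ENNReal.ofReal 2⁻¹ * (ENNReal.ofReal (8 * R) * v + ENNReal.ofReal (9 * R) * v) := by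
        calc ∫⁻ x in B, ENNReal.ofReal ((‖x - aj‖ * ‖x - ai‖)⁻¹)
            ≤ ∫⁻ x in B, ENNReal.ofReal 2⁻¹ *
              (ENNReal.ofReal ((‖x - aj‖ ^ 2)⁻¹) + ENNReal.ofReal ((‖x - ai‖ ^ 2)⁻¹)) := by
              refine lintegral_mono fun x => ?_
              rw [← ENNReal.ofReal_add (by positivity) (by positivity),
                ← ENNReal.ofReal_mul (by norm_num)]
              exact ENNReal.ofReal_le_ofReal (hpt x)
          _ = ENNReal.ofReal 2⁻¹ * ((∫⁻ x in B, ENNReal.ofReal ((‖x - aj‖ ^ 2)⁻¹))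
              + ∫⁻ x in B, ENNReal.ofReal ((‖x - ai‖ ^ 2)⁻¹)) := by
              rw [lintegral_const_mul' _ _ ENNReal.ofReal_ne_top,
                lintegral_add_left (by fun_prop)]
          _ ≤ ENNReal.ofReal 2⁻¹ * (ENNReal.ofReal (8 * R) * v + ENNReal.ofReal (9 * R) * v) := by
              gcongr
              · have h := lint_inv_pow_le aj hR (p := 2) one_le_two le_rfl
                simpa [hB, hv] using h
              · have h := lint_inv_pow_off aj ai hR (p := 2) one_le_two le_rfl
                simpa [hB, hv] using h
      calc ENNReal.ofReal d * ∫⁻ x in B, ENNReal.ofReal ((‖x - aj‖ * ‖x - ai‖)⁻¹)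
          ≤ ENNReal.ofReal (2 * R) *
            (ENNReal.ofReal 2⁻¹ * (ENNReal.ofReal (8 * R) * v + ENNReal.ofReal (9 * R) * v)) :=
            mul_le_mul' (ENNReal.ofReal_le_ofReal hcase) step
        _ = ENNReal.ofReal (2 * R) * (ENNReal.ofReal 2⁻¹ * (ENNReal.ofReal (17 * R) * v)) := by
            rw [← add_mul, ← ENNReal.ofReal_add (by positivity) (by positivity)]
            congr 3
            ring
        _ = ENNReal.ofReal (2 * R * 2⁻¹ * (17 * R)) * v :=
            ofReal_mul3 _ _ _ (by positivity) (by positivity) v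
        _ ≤ ENNReal.ofReal (18 * R ^ 2) * v :=
            mul_le_mul_left (ENNReal.ofReal_le_ofReal (by nlinarith [sq_nonneg R])) v
    · -- d large : s ≥ d/2 on B
      have hdpos : 0 < d := lt_trans (by positivity) hcase
      have hpt : ∀ x ∈ B, ((‖x - aj‖ * ‖x - ai‖)⁻¹ : ℝ) ≤ 2 / d * ‖x - aj‖⁻¹ := by
        intro x hxB
        have hsd : d / 2 ≤ ‖x - ai‖ := by
          have htri : d ≤ ‖ai - x‖ + ‖x - aj‖ := by
            calc d = ‖(ai - x) + (x - aj)‖ := by rw [hd]; congr 1; abel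
              _ ≤ ‖ai - x‖ + ‖x - aj‖ := norm_add_le _ _
          have hxr : ‖x - aj‖ ≤ R := by rwa [hB, mem_closedBall, dist_eq_norm] at hxB
          have : ‖ai - x‖ = ‖x - ai‖ := norm_sub_rev _ _
          linarith
        rcases eq_or_lt_of_le (norm_nonneg (x - aj)) with h0 | hrp
        · rw [← h0, zero_mul, inv_zero]; positivity
        have hsp : 0 < ‖x - ai‖ := lt_of_lt_of_le (by positivity) hsd
        rw [mul_inv, mul_comm]
        gcongr ?_ * _
        rw [inv_le_comm₀ hsp (by positivity), inv_div]
        exact hsd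
      calc ENNReal.ofReal d * ∫⁻ x in B, ENNReal.ofReal ((‖x - aj‖ * ‖x - ai‖)⁻¹)
          ≤ ENNReal.ofReal d * ∫⁻ x in B, ENNReal.ofReal (2 / d * ‖x - aj‖⁻¹) :=
            mul_le_mul' le_rfl (setLIntegral_mono' hBm fun x hx =>
              ENNReal.ofReal_le_ofReal (hpt x hx))
        _ = ENNReal.ofReal d * (ENNReal.ofReal (2 / d) * ∫⁻ x in B, ENNReal.ofReal (‖x - aj‖⁻¹)) := by
            congr 1
            rw [← lintegral_const_mul' _ _ ENNReal.ofReal_ne_top]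
            refine lintegral_congr fun x => ?_
            rw [← ENNReal.ofReal_mul (by positivity)]
        _ ≤ ENNReal.ofReal d * (ENNReal.ofReal (2 / d) * (ENNReal.ofReal (8 * R ^ 2) * v)) := by
            gcongr
            have h := lint_inv_pow_le aj hR (p := 1) le_rfl one_le_two
            simpa [hB, hv] using h
        _ = ENNReal.ofReal (d * (2 / d) * (8 * R ^ 2)) * v :=
            ofReal_mul3 _ _ _ hd0 (by positivity) v
        _ ≤ ENNReal.ofReal (18 * R ^ 2) * v := by
            refine mul_le_mul_left (ENNReal.ofReal_le_ofReal ?_) v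
            have h2 : d * (2 / d) = 2 := by field_simp
            rw [h2]
            nlinarith [sq_nonneg R]
  have main : ∫⁻ x in B, ENNReal.ofReal (g x) ≤ ENNReal.ofReal (432 * δ ^ 2 / P) * v := by
    have hgeq : ∀ x : E3, ENNReal.ofReal (g x) =
        ENNReal.ofReal P⁻¹ * (ENNReal.ofReal (‖x - ai‖⁻¹) +
          ENNReal.ofReal d * ENNReal.ofReal ((‖x - aj‖ * ‖x - ai‖)⁻¹)) := by
      intro x
      rw [hg]
      rw [ENNReal.ofReal_mul (by positivity), ENNReal.ofReal_add (by positivity) (by positivity),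
        ENNReal.ofReal_mul hd0]
    calc ∫⁻ x in B, ENNReal.ofReal (g x)
        = ENNReal.ofReal P⁻¹ * ((∫⁻ x in B, ENNReal.ofReal (‖x - ai‖⁻¹)) +
            ENNReal.ofReal d * ∫⁻ x in B, ENNReal.ofReal ((‖x - aj‖ * ‖x - ai‖)⁻¹)) := by
          rw [lintegral_congr fun x => hgeq x,
            lintegral_const_mul' _ _ ENNReal.ofReal_ne_top,
            lintegral_add_left hm1, lintegral_const_mul' _ _ ENNReal.ofReal_ne_top]
      _ ≤ ENNReal.ofReal P⁻¹ *
            (ENNReal.ofReal (9 * R ^ 2) * v + ENNReal.ofReal (18 * R ^ 2) * v) := by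
          exact mul_le_mul' le_rfl (add_le_add b1 b2)
      _ = ENNReal.ofReal P⁻¹ * (ENNReal.ofReal (27 * R ^ 2) * v) := by
          rw [← add_mul, ← ENNReal.ofReal_add (by positivity) (by positivity),
            show (9 * R ^ 2 + 18 * R ^ 2 : ℝ) = 27 * R ^ 2 from by ring]
      _ = ENNReal.ofReal (432 * δ ^ 2 / P) * v := by
          rw [← mul_assoc, ← ENNReal.ofReal_mul (by positivity)]
          congr 2
          rw [hRdef, div_eq_mul_inv]
          ring
  rw [hsetB]
  have heq : ∫ x in B, F x = (∫⁻ x in B, ENNReal.ofReal (F x)).toReal :=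
    integral_eq_lintegral_of_nonneg_ae (Filter.Eventually.of_forall fun x => by positivity)
      hFc.aestronglyMeasurable
  rw [heq]
  have hfin : ENNReal.ofReal (432 * δ ^ 2 / P) * v ≠ ⊤ :=
    ENNReal.mul_ne_top ENNReal.ofReal_ne_top hvne
  calc (∫⁻ x in B, ENNReal.ofReal (F x)).toReal
      ≤ (ENNReal.ofReal (432 * δ ^ 2 / P) * v).toReal :=
        ENNReal.toReal_mono hfin ((lintegral_mono_ae hae).trans main)
    _ = 432 * V * δ ^ 2 / P := by
        rw [ENNReal.toReal_mul, ENNReal.toReal_ofReal (by positivity)]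
        ring
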